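/- Let (P_m)_{m≥1} be a sequence of finite measurable partitions of X such that P_{m+1} refines P_m for every m and which is generating for X relative to π, i.e. ( ⋁_{m≥1} ⋁_{g∈G} T^{-g}P_m ) ∨ π^{-1}(B_Y) = B_X modulo μ-null sets. Then for every rate function U and every Følner sequence (F_n) for G, h_slow^{U,(F_n)}(X | π) = lim_{m→∞} h_slow^{U,(F_n)}(X, P_m | π) = sup_m h_slow^{U,(F_n)}(X, P_m | π). -/

import Mathlib

set_option maxHeartbeats 1000000


open MeasureTheory Filter Set Topology
open scoped ENNReal Classical symmDiff

section SlowEntropyDefs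

variable {G : Type*} [Group G]

/-- A measure-preserving action of a group `G` on a probability space. -/
structure IsMPSystem {X : Type*} [MeasurableSpace X] (T : G → X → X) (μ : Measure X) : Prop where
  prob : IsProbabilityMeasure μ
  meas : ∀ g, Measurable (T g)
  mp : ∀ g, MeasurePreserving (T g) μ μ
  mul : ∀ g g' x, T (g * g') x = T g (T g' x)
  one : ∀ x, T 1 x = x

/-- A factor map between measure-preserving `G`-systems. -/
structure IsFactorMap {X Y : Type*} [MeasurableSpace X] [MeasurableSpace Y]
    (T : G → X → X) (μ : Measure X) (S : G → Y → Y) (ν : Measure Y) (π : X → Y) : Prop where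
  meas : Measurable π
  map : μ.map π = ν
  equiv : ∀ g x, π (T g x) = S g (π x)

/-- An isomorphism of measure-preserving `G`-systems: a factor map with an a.e. two-sided
inverse factor map. -/
def IsIsomorphism {X Y : Type*} [MeasurableSpace X] [MeasurableSpace Y]
    (T : G → X → X) (μ : Measure X) (S : G → Y → Y) (ν : Measure Y) (π : X → Y) : Prop :=
  IsFactorMap T μ S ν π ∧ ∃ ρ : Y → X, IsFactorMap S ν T μ ρ ∧
    (∀ᵐ x ∂μ, ρ (π x) = x) ∧ (∀ᵐ y ∂ν, π (ρ y) = y)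

/-- `μy` is a disintegration of `μ` over the map `π : X → Y` (with `ν` the image of `μ`). -/
structure IsDisintegration {X Y : Type*} [MeasurableSpace X] [MeasurableSpace Y]
    (μ : Measure X) (ν : Measure Y) (π : X → Y) (μy : Y → Measure X) : Prop where
  prob : ∀ y, IsProbabilityMeasure (μy y)
  meas : ∀ s : Set X, MeasurableSet s → Measurable fun y => μy y s
  eq : ∀ s : Set X, MeasurableSet s → μ s = ∫⁻ y, μy y s ∂ν
  supp : ∀ᵐ y ∂ν, μy y (π ⁻¹' {y}) = 1

/-- A (left) Følner sequence for `G`: a sequence of nonempty finite subsets `F n ⊆ G` with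
`|gFₙ ∩ Fₙ| / |Fₙ| → 1` for every `g ∈ G`. -/
def IsFolner (F : ℕ → Finset G) : Prop :=
  (∀ n, (F n).Nonempty) ∧ ∀ g : G,
    Tendsto (fun n => ((((F n).image fun h => g * h) ∩ F n).card : ℝ) / ((F n).card : ℝ))
      atTop (nhds 1)

/-- The normalized Hamming distance `d_{P,F}` between the `(P,F)`-names of two points. -/
noncomputable def hamDist {X : Type*} (T : G → X → X) {r : ℕ} (P : X → Fin r)
    (F : Finset G) (x x' : X) : ℝ :=
  ((F.filter fun f => P (T f x) ≠ P (T f x')).card : ℝ) / (F.card : ℝ)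

/-- The set `E` has `d_{P,F}`-diameter at most `ε`. -/
def diamLE {X : Type*} (T : G → X → X) {r : ℕ} (P : X → Fin r) (F : Finset G)
    (E : Set X) (ε : ℝ) : Prop :=
  ∀ x ∈ E, ∀ x' ∈ E, hamDist T P F x x' ≤ ε

/-- The Hamming `ε`-covering number `cov(λ, P, F, ε)`: the smallest `M` such that there are
sets `E₁, …, E_M` of `d_{P,F}`-diameter at most `ε` whose union has `λ`-measure `≥ 1 - ε`. -/
noncomputable def hamCov {X : Type*} [MeasurableSpace X] (T : G → X → X) (lam : Measure X)
    {r : ℕ} (P : X → Fin r) (F : Finset G) (ε : ℝ) : ℕ :=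
  sInf {M : ℕ | ∃ E : Fin M → Set X, (∀ i, diamLE T P F (E i) ε) ∧
    ENNReal.ofReal (1 - ε) ≤ lam (⋃ i, E i)}

/-- The relative Hamming `ε`-covering number `cov(μ, P, F, ε | π)`, defined through the
disintegration `μy` of `μ` over `π` and the image measure `ν`: the smallest `M` such that
there exists `S ⊆ Y` with `ν S ≥ 1 - ε` and `cov(μ_y, P, F, ε) ≤ M` for every `y ∈ S`. -/
noncomputable def hamCovRel {X Y : Type*} [MeasurableSpace X] [MeasurableSpace Y]
    (T : G → X → X) (μy : Y → Measure X) (ν : Measure Y) {r : ℕ} (P : X → Fin r)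
    (F : Finset G) (ε : ℝ) : ℕ :=
  sInf {M : ℕ | ∃ S : Set Y, MeasurableSet S ∧ ENNReal.ofReal (1 - ε) ≤ ν S ∧
    ∀ y ∈ S, hamCov T (μy y) P F ε ≤ M}

/-- A rate function: an increasing positive function on `ℕ` tending to infinity. -/
def IsRateFunction (U : ℕ → ℝ) : Prop :=
  (∀ n, 0 < U n) ∧ Monotone U ∧ Tendsto U atTop atTop

/-- Relative slow entropy of a partition:
`sup_{ε>0} limsup_n cov(μ, P, F_n, ε | π) / U(|F_n|)`, valued in `[0,∞]`. -/
noncomputable def slowEntropyPartRel {X Y : Type*} [MeasurableSpace X] [MeasurableSpace Y]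
    (T : G → X → X) (μy : Y → Measure X) (ν : Measure Y) {r : ℕ} (P : X → Fin r)
    (U : ℕ → ℝ) (F : ℕ → Finset G) : ℝ≥0∞ :=
  ⨆ ε ∈ Ioi (0 : ℝ),
    Filter.limsup
      (fun n => ENNReal.ofReal ((hamCovRel T μy ν P (F n) ε : ℝ) / U (F n).card)) atTop

/-- Relative slow entropy: the supremum over all finite measurable partitions. -/
noncomputable def slowEntropyRel {X Y : Type*} [MeasurableSpace X] [MeasurableSpace Y]
    (T : G → X → X) (μy : Y → Measure X) (ν : Measure Y)
    (U : ℕ → ℝ) (F : ℕ → Finset G) : ℝ≥0∞ :=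
  ⨆ (r : ℕ) (P : X → Fin r) (_ : Measurable P), slowEntropyPartRel T μy ν P U F

/-- The partition distance `dist_λ(P, Q) = λ{x : P(x) ≠ Q(x)}` between two labeled
partitions indexed by the same set. -/
noncomputable def partDist {Z : Type*} [MeasurableSpace Z] (lam : Measure Z)
    {ι : Type*} (P Q : Z → ι) : ℝ≥0∞ :=
  lam {z | P z ≠ Q z}

/-- Ergodicity of a measure-preserving `G`-action. -/
def IsErgodicAction {X : Type*} [MeasurableSpace X] (T : G → X → X) (μ : Measure X) : Prop :=
  ∀ s : Set X, MeasurableSet s → (∀ g, T g ⁻¹' s = s) → μ s = 0 ∨ μ s = 1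

end SlowEntropyDefs


section SlowEntropyHelpers

variable {G X Y : Type*} [Group G] [MeasurableSpace X] [MeasurableSpace Y]

lemma hamDist_nonneg (T : G → X → X) {r : ℕ} (P : X → Fin r) (F : Finset G) (x x' : X) :
    0 ≤ hamDist T P F x x' := by
  unfold hamDist; positivity

lemma hamDist_le_comp (T : G → X → X) {r r' : ℕ} {P : X → Fin r} {Q : X → Fin r'}
    {c : Fin r' → Fin r} (hc : P = c ∘ Q) (F : Finset G) (x x' : X) :
    hamDist T P F x x' ≤ hamDist T Q F x x' := by
  unfold hamDist
  have hsub : (F.filter fun f => P (T f x) ≠ P (T f x')) ⊆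
      F.filter fun f => Q (T f x) ≠ Q (T f x') :=
    Finset.monotone_filter_right F fun f _ h hQ => h (by simp [hc, hQ])
  have hcard := Finset.card_le_card hsub
  have h0 : (0:ℝ) ≤ (F.card : ℝ) := Nat.cast_nonneg _
  gcongr

lemma hamCov_set_nonempty (T : G → X → X) (lam : Measure X) [IsProbabilityMeasure lam]
    {r : ℕ} (P : X → Fin r) (F : Finset G) {ε : ℝ} (hε : 0 < ε) :
    ∃ E : Fin (Fintype.card (F → Fin r)) → Set X,
      (∀ i, diamLE T P F (E i) ε) ∧ ENNReal.ofReal (1 - ε) ≤ lam (⋃ i, E i) := by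
  classical
  let e := Fintype.equivFin (F → Fin r)
  refine ⟨fun i => {x | ∀ f : F, P (T (f : G) x) = e.symm i f}, ?_, ?_⟩
  · intro i x hx x' hx'
    have h0 : (F.filter fun f => P (T f x) ≠ P (T f x')) = ∅ := by
      ext f
      simp only [Finset.mem_filter, Finset.notMem_empty, iff_false, not_and]
      intro hf hne
      exact hne (by rw [hx ⟨f, hf⟩, hx' ⟨f, hf⟩])
    unfold hamDist
    rw [h0]
    simp only [Finset.card_empty, Nat.cast_zero, zero_div]
    linarith
  · have huniv : (⋃ i, {x : X | ∀ f : F, P (T (f : G) x) = e.symm i f}) = univ := by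
      refine eq_univ_of_forall fun x => mem_iUnion.mpr ?_
      exact ⟨e fun f => P (T (f : G) x), fun f => by simp⟩
    rw [huniv, measure_univ]
    exact ENNReal.ofReal_le_one.mpr (by linarith)

lemma hamCov_le (T : G → X → X) (lam : Measure X) {r : ℕ} (P : X → Fin r) (F : Finset G)
    (ε : ℝ) {M : ℕ} (h : ∃ E : Fin M → Set X, (∀ i, diamLE T P F (E i) ε) ∧
      ENNReal.ofReal (1 - ε) ≤ lam (⋃ i, E i)) :
    hamCov T lam P F ε ≤ M :=
  Nat.sInf_le h

lemma hamCov_mem (T : G → X → X) (lam : Measure X) [IsProbabilityMeasure lam]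
    {r : ℕ} (P : X → Fin r) (F : Finset G) {ε : ℝ} (hε : 0 < ε) :
    ∃ E : Fin (hamCov T lam P F ε) → Set X,
      (∀ i, diamLE T P F (E i) ε) ∧ ENNReal.ofReal (1 - ε) ≤ lam (⋃ i, E i) := by
  have hne : {M : ℕ | ∃ E : Fin M → Set X, (∀ i, diamLE T P F (E i) ε) ∧
      ENNReal.ofReal (1 - ε) ≤ lam (⋃ i, E i)}.Nonempty :=
    ⟨Fintype.card (F → Fin r), hamCov_set_nonempty T lam P F hε⟩
  exact Nat.sInf_mem hne

lemma hamCov_le_comp (T : G → X → X) (lam : Measure X) [IsProbabilityMeasure lam]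
    {r r' : ℕ} {P : X → Fin r} {Q : X → Fin r'} {c : Fin r' → Fin r} (hc : P = c ∘ Q)
    (F : Finset G) {ε : ℝ} (hε : 0 < ε) :
    hamCov T lam P F ε ≤ hamCov T lam Q F ε := by
  obtain ⟨E, hd, hm⟩ := hamCov_mem T lam Q F hε
  exact hamCov_le T lam P F ε ⟨E, fun i x hx x' hx' =>
    le_trans (hamDist_le_comp T hc F x x') (hd i x hx x' hx'), hm⟩

lemma hamCovRel_le (T : G → X → X) (μy : Y → Measure X) (ν : Measure Y) {r : ℕ}
    (P : X → Fin r) (F : Finset G) (ε : ℝ) {M : ℕ}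
    (h : ∃ S : Set Y, MeasurableSet S ∧ ENNReal.ofReal (1 - ε) ≤ ν S ∧
      ∀ y ∈ S, hamCov T (μy y) P F ε ≤ M) :
    hamCovRel T μy ν P F ε ≤ M :=
  Nat.sInf_le h

lemma hamCovRel_mem (T : G → X → X) (μy : Y → Measure X) (ν : Measure Y)
    [IsProbabilityMeasure ν] (hprob : ∀ y, IsProbabilityMeasure (μy y)) {r : ℕ}
    (P : X → Fin r) (F : Finset G) {ε : ℝ} (hε : 0 < ε) :
    ∃ S : Set Y, MeasurableSet S ∧ ENNReal.ofReal (1 - ε) ≤ ν S ∧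
      ∀ y ∈ S, hamCov T (μy y) P F ε ≤ hamCovRel T μy ν P F ε := by
  have hne : {M : ℕ | ∃ S : Set Y, MeasurableSet S ∧ ENNReal.ofReal (1 - ε) ≤ ν S ∧
      ∀ y ∈ S, hamCov T (μy y) P F ε ≤ M}.Nonempty := by
    refine ⟨Fintype.card (F → Fin r), univ, .univ, ?_, fun y _ => ?_⟩
    · rw [measure_univ]; exact ENNReal.ofReal_le_one.mpr (by linarith)
    · haveI := hprob y
      exact hamCov_le _ _ _ _ _ (hamCov_set_nonempty T (μy y) P F hε)
  exact Nat.sInf_mem hne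


lemma hamCovRel_le_comp (T : G → X → X) (μy : Y → Measure X) (ν : Measure Y)
    [IsProbabilityMeasure ν] (hprob : ∀ y, IsProbabilityMeasure (μy y)) {r r' : ℕ}
    {P : X → Fin r} {Q : X → Fin r'} {c : Fin r' → Fin r} (hc : P = c ∘ Q)
    (F : Finset G) {ε : ℝ} (hε : 0 < ε) :
    hamCovRel T μy ν P F ε ≤ hamCovRel T μy ν Q F ε := by
  obtain ⟨S, hSm, hSν, hScov⟩ := hamCovRel_mem T μy ν hprob Q F hε
  refine hamCovRel_le T μy ν P F ε ⟨S, hSm, hSν, fun y hy => ?_⟩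
  haveI := hprob y
  exact le_trans (hamCov_le_comp T (μy y) hc F hε) (hScov y hy)

lemma slowEntropyPartRel_le_comp (T : G → X → X) (μy : Y → Measure X) (ν : Measure Y)
    [IsProbabilityMeasure ν] (hprob : ∀ y, IsProbabilityMeasure (μy y)) {r r' : ℕ}
    {P : X → Fin r} {Q : X → Fin r'} {c : Fin r' → Fin r} (hc : P = c ∘ Q)
    (U : ℕ → ℝ) (hUpos : ∀ n, 0 < U n) (F : ℕ → Finset G) :
    slowEntropyPartRel T μy ν P U F ≤ slowEntropyPartRel T μy ν Q U F := by
  refine iSup₂_mono fun ε hε => Filter.limsup_le_limsup (Eventually.of_forall fun n => ?_)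
  apply ENNReal.ofReal_le_ofReal
  have := hamCovRel_le_comp T μy ν hprob hc (F n) (hε : (0:ℝ) < ε)
  have hcast : ((hamCovRel T μy ν P (F n) ε : ℝ)) ≤ hamCovRel T μy ν Q (F n) ε :=
    Nat.cast_le.mpr this
  have h0 := (hUpos (F n).card).le
  gcongr

end SlowEntropyHelpers
section SlowEntropyHelpers2

variable {G X Y : Type*} [Group G] [MeasurableSpace X] [MeasurableSpace Y]

/-- Approximation step: if the set where the `P`- and `Q`-names differ a lot is small,
covering numbers for `P` are controlled by those of `Q`. -/
lemma hamCov_le_of_close (T : G → X → X) (lam : Measure X) [IsProbabilityMeasure lam]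
    {rP rQ : ℕ} (P : X → Fin rP) (Q : X → Fin rQ) (F : Finset G) {ε : ℝ}
    (hε : 0 < ε)
    (hbad : lam {x | ε/4 ≤ ((F.filter fun f => (P (T f x) : ℕ) ≠ (Q (T f x) : ℕ)).card : ℝ) / F.card}
      ≤ ENNReal.ofReal (ε/2)) :
    hamCov T lam P F ε ≤ hamCov T lam Q F (ε/4) := by
  classical
  obtain ⟨E, hd, hm⟩ := hamCov_mem T lam Q F (by positivity : (0:ℝ) < ε/4)
  set D : X → ℝ := fun x =>
    ((F.filter fun f => (P (T f x) : ℕ) ≠ (Q (T f x) : ℕ)).card : ℝ) / F.card with hD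
  set Good : Set X := {x | D x < ε/4} with hGood
  refine hamCov_le T lam P F ε ⟨fun i => E i ∩ Good, fun i x hx x' hx' => ?_, ?_⟩
  · have hQd : hamDist T Q F x x' ≤ ε/4 := hd i x hx.1 x' hx'.1
    rcases Nat.eq_zero_or_pos F.card with h0 | h0
    · unfold hamDist; rw [h0]; norm_num; linarith
    have hFpos : (0:ℝ) < F.card := by exact_mod_cast h0
    have hsub : (F.filter fun f => P (T f x) ≠ P (T f x')) ⊆
        ((F.filter fun f => Q (T f x) ≠ Q (T f x')) ∪
         (F.filter fun f => (P (T f x) : ℕ) ≠ (Q (T f x) : ℕ))) ∪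
         (F.filter fun f => (P (T f x') : ℕ) ≠ (Q (T f x') : ℕ)) := by
      intro f hf
      rcases Finset.mem_filter.mp hf with ⟨hfF, hne⟩
      by_contra hcon
      simp only [Finset.mem_union, Finset.mem_filter, not_or, not_and, not_ne_iff] at hcon
      obtain ⟨⟨h1, h2⟩, h3⟩ := hcon
      have e1 := h1 hfF
      have e2 := h2 hfF
      have e3 := h3 hfF
      apply hne
      have : (P (T f x) : ℕ) = (P (T f x') : ℕ) := by rw [e2, e3, e1]
      exact Fin.ext this
    have hcard : ((F.filter fun f => P (T f x) ≠ P (T f x')).card : ℝ) ≤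
        ((F.filter fun f => Q (T f x) ≠ Q (T f x')).card : ℝ)
        + ((F.filter fun f => (P (T f x) : ℕ) ≠ (Q (T f x) : ℕ)).card : ℝ)
        + ((F.filter fun f => (P (T f x') : ℕ) ≠ (Q (T f x') : ℕ)).card : ℝ) := by
      have := (Finset.card_le_card hsub).trans <| (Finset.card_union_le _ _).trans
        (add_le_add_left (Finset.card_union_le _ _) _)
      exact_mod_cast this
    have h2 : D x < ε/4 := hx.2
    have h3 : D x' < ε/4 := hx'.2
    have hQd' : ((F.filter fun f => Q (T f x) ≠ Q (T f x')).card : ℝ) / F.card ≤ ε/4 := hQd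
    have hDx : ((F.filter fun f => (P (T f x) : ℕ) ≠ (Q (T f x) : ℕ)).card : ℝ) / F.card < ε/4 := h2
    have hDx' : ((F.filter fun f => (P (T f x') : ℕ) ≠ (Q (T f x') : ℕ)).card : ℝ) / F.card < ε/4 := h3
    show ((F.filter fun f => P (T f x) ≠ P (T f x')).card : ℝ) / F.card ≤ ε
    rw [div_le_iff₀ hFpos]
    rw [div_le_iff₀ hFpos] at hQd'
    rw [div_lt_iff₀ hFpos] at hDx hDx'
    nlinarith
  · have hsub2 : (⋃ i, E i) ⊆ (⋃ i, E i ∩ Good) ∪ Goodᶜ := by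
      intro x hx
      by_cases hg : x ∈ Good
      · left; rcases mem_iUnion.mp hx with ⟨i, hi⟩; exact mem_iUnion.mpr ⟨i, hi, hg⟩
      · right; exact hg
    have h1 : ENNReal.ofReal (1 - ε/4) ≤ lam (⋃ i, E i ∩ Good) + lam Goodᶜ :=
      le_trans hm (le_trans (measure_mono hsub2) (measure_union_le _ _))
    have hGc : Goodᶜ = {x | ε/4 ≤ D x} := by
      ext x; simp [hGood, not_lt]
    rw [hGc] at h1
    have h2 : ENNReal.ofReal (1 - ε/4) ≤ lam (⋃ i, E i ∩ Good) + ENNReal.ofReal (ε/2) :=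
      le_trans h1 (add_le_add_right hbad _)
    have h3 : ENNReal.ofReal (1 - ε/4) - ENNReal.ofReal (ε/2) ≤ lam (⋃ i, E i ∩ Good) :=
      tsub_le_iff_right.mpr h2
    refine le_trans ?_ h3
    rw [← ENNReal.ofReal_sub _ (by positivity : (0:ℝ) ≤ ε/2)]
    exact ENNReal.ofReal_le_ofReal (by linarith)

/-- Fiber step: covering numbers for a partition determined on a full set by another one. -/
lemma hamCov_le_of_full (T : G → X → X) (lam : Measure X) [IsProbabilityMeasure lam]
    {rQ rM : ℕ} (Q : X → Fin rQ) (Pm : X → Fin rM) (F KF : Finset G) {ε ε' : ℝ} {c : ℕ}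
    (hε' : 0 < ε') (hle : ε' ≤ ε) (hc : (c:ℝ) * ε' ≤ ε)
    (Full : Set X) (hfull : lam Fullᶜ = 0)
    (hcount : ∀ x ∈ Full, ∀ x' ∈ Full, hamDist T Q F x x' ≤ c * hamDist T Pm KF x x') :
    hamCov T lam Q F ε ≤ hamCov T lam Pm KF ε' := by
  obtain ⟨E, hd, hm⟩ := hamCov_mem T lam Pm KF hε'
  refine hamCov_le _ _ _ _ _ ⟨fun i => E i ∩ Full, fun i x hx x' hx' => ?_, ?_⟩
  · refine le_trans (hcount x hx.2 x' hx'.2) ?_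
    have hdi := hd i x hx.1 x' hx'.1
    calc (c:ℝ) * hamDist T Pm KF x x' ≤ (c:ℝ) * ε' := by
          exact mul_le_mul_of_nonneg_left hdi (Nat.cast_nonneg _)
      _ ≤ ε := hc
  · have heq : lam (⋃ i, E i ∩ Full) = lam (⋃ i, E i) := by
      rw [← iUnion_inter]
      exact measure_inter_conull hfull
    rw [heq]
    exact le_trans (ENNReal.ofReal_le_ofReal (by linarith)) hm

/-- Følner step: covering numbers along `KF` are controlled by those along `F ⊆ KF` when
`KF \ F` is small. -/
lemma hamCov_le_of_subset (T : G → X → X) (lam : Measure X) [IsProbabilityMeasure lam]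
    {rM : ℕ} (Pm : X → Fin rM) (F KF : Finset G) (hFKF : F ⊆ KF) {ε₂ ε₃ η : ℝ}
    (hε₃ : 0 < ε₃) (hη : 0 ≤ η) (hsum : ε₃ + η ≤ ε₂)
    (hcard : (((KF \ F).card : ℕ) : ℝ) ≤ η * F.card) :
    hamCov T lam Pm KF ε₂ ≤ hamCov T lam Pm F ε₃ := by
  classical
  obtain ⟨E, hd, hm⟩ := hamCov_mem T lam Pm F hε₃
  refine hamCov_le _ _ _ _ _ ⟨E, fun i x hx x' hx' => ?_,
    le_trans (ENNReal.ofReal_le_ofReal (by linarith)) hm⟩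
  have hdF : ((F.filter fun f => Pm (T f x) ≠ Pm (T f x')).card : ℝ) / F.card ≤ ε₃ :=
    hd i x hx x' hx'
  rcases Nat.eq_zero_or_pos KF.card with h0 | h0
  · show ((KF.filter fun f => Pm (T f x) ≠ Pm (T f x')).card : ℝ) / KF.card ≤ ε₂
    rw [h0]; norm_num; linarith
  have hKFpos : (0:ℝ) < KF.card := by exact_mod_cast h0
  have hFpos : (0:ℝ) < F.card := by
    rcases Nat.eq_zero_or_pos F.card with hf0 | hf0
    · exfalso
      have hKFF : KF \ F = KF := by
        rw [Finset.sdiff_eq_self_iff_disjoint]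
        rw [Finset.card_eq_zero] at hf0
        simp [hf0]
      rw [hKFF, hf0] at hcard
      have hc0 : (KF.card : ℝ) ≤ 0 := by simpa using hcard
      linarith
    · exact_mod_cast hf0
  have hsplit : (KF.filter fun f => Pm (T f x) ≠ Pm (T f x')) ⊆
      (F.filter fun f => Pm (T f x) ≠ Pm (T f x')) ∪ (KF \ F) := by
    intro f hf
    rcases Finset.mem_filter.mp hf with ⟨hfKF, hne⟩
    by_cases hfF : f ∈ F
    · exact Finset.mem_union_left _ (Finset.mem_filter.mpr ⟨hfF, hne⟩)
    · exact Finset.mem_union_right _ (Finset.mem_sdiff.mpr ⟨hfKF, hfF⟩)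
  have hcard2 : ((KF.filter fun f => Pm (T f x) ≠ Pm (T f x')).card : ℝ) ≤
      ((F.filter fun f => Pm (T f x) ≠ Pm (T f x')).card : ℝ) + ((KF \ F).card : ℝ) := by
    exact_mod_cast (Finset.card_le_card hsplit).trans (Finset.card_union_le _ _)
  have hFle : (F.card : ℝ) ≤ KF.card := by exact_mod_cast Finset.card_le_card hFKF
  show ((KF.filter fun f => Pm (T f x) ≠ Pm (T f x')).card : ℝ) / KF.card ≤ ε₂
  rw [div_le_iff₀ hKFpos]
  rw [div_le_iff₀ hFpos] at hdF
  nlinarith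

/-- Counting bound: a partition determined by `K`-translates of `Pm` and the factor. -/
lemma hamDist_det_bound (T : G → X → X) (hmul : ∀ g g' x, T (g * g') x = T g (T g' x))
    {rM rQ : ℕ} (Pm : X → Fin rM) (Q : X → Fin rQ) (π : X → Y) (Sa : G → Y → Y)
    (hequiv : ∀ g x, π (T g x) = Sa g (π x))
    (K F : Finset G)
    (hdet : ∀ z z', π z = π z' → (∀ g ∈ K, Pm (T g z) = Pm (T g z')) → Q z = Q z')
    (x x' : X) (hxx : π x = π x') :
    hamDist T Q F x x' ≤ (K.card^2 : ℕ) *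
      hamDist T Pm ((K ×ˢ F).image fun p => p.1 * p.2) x x' := by
  classical
  set KF := (K ×ˢ F).image fun p : G × G => p.1 * p.2 with hKF
  set Bad := KF.filter fun h => Pm (T h x) ≠ Pm (T h x') with hBad
  have hsub : (F.filter fun f => Q (T f x) ≠ Q (T f x')) ⊆
      Bad.biUnion fun h => K.image fun g => g⁻¹ * h := by
    intro f hf
    rcases Finset.mem_filter.mp hf with ⟨hfF, hne⟩
    have hpi : π (T f x) = π (T f x') := by rw [hequiv, hequiv, hxx]
    have : ¬ ∀ g ∈ K, Pm (T g (T f x)) = Pm (T g (T f x')) := by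
      intro hall
      exact hne (hdet _ _ hpi hall)
    push_neg at this
    obtain ⟨g, hgK, hgne⟩ := this
    refine Finset.mem_biUnion.mpr ⟨g * f, ?_, ?_⟩
    · refine Finset.mem_filter.mpr ⟨?_, ?_⟩
      · exact Finset.mem_image.mpr ⟨(g, f), Finset.mem_product.mpr ⟨hgK, hfF⟩, rfl⟩
      · rw [hmul, hmul]; exact hgne
    · exact Finset.mem_image.mpr ⟨g, hgK, by group⟩
  have hcard1 : (F.filter fun f => Q (T f x) ≠ Q (T f x')).card ≤ Bad.card * K.card := by
    refine le_trans (Finset.card_le_card hsub) (le_trans (Finset.card_biUnion_le) ?_)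
    calc ∑ h ∈ Bad, (K.image fun g => g⁻¹ * h).card ≤ ∑ _h ∈ Bad, K.card :=
          Finset.sum_le_sum fun h _ => Finset.card_image_le
      _ = Bad.card * K.card := by rw [Finset.sum_const, smul_eq_mul]
  have hKFcard : KF.card ≤ K.card * F.card := by
    calc KF.card ≤ (K ×ˢ F).card := Finset.card_image_le
      _ = K.card * F.card := Finset.card_product _ _
  show ((F.filter fun f => Q (T f x) ≠ Q (T f x')).card : ℝ) / F.card ≤
    ((K.card^2 : ℕ) : ℝ) * ((Bad.card : ℝ) / KF.card)
  rcases Nat.eq_zero_or_pos F.card with hF0 | hF0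
  · rw [hF0]; norm_num; positivity
  rcases Nat.eq_zero_or_pos KF.card with hKF0 | hKF0
  · -- KF empty forces the filter empty (since K or F empty; F nonempty so K empty, Bad empty,
    -- and the biUnion is empty)
    have hKFe : KF = ∅ := Finset.card_eq_zero.mp hKF0
    have hBad0 : Bad = ∅ := by rw [hBad, hKFe, Finset.filter_empty]
    have : (F.filter fun f => Q (T f x) ≠ Q (T f x')).card = 0 := by
      have := hcard1
      rw [hBad0] at this
      simpa using this
    rw [this]
    norm_num; positivity
  have hFpos : (0:ℝ) < F.card := by exact_mod_cast hF0
  have hKFpos : (0:ℝ) < KF.card := by exact_mod_cast hKF0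
  rw [mul_div_assoc'] at *
  rw [div_le_div_iff₀ hFpos hKFpos]
  have h1 : ((F.filter fun f => Q (T f x) ≠ Q (T f x')).card : ℝ) ≤ (Bad.card : ℝ) * K.card := by
    exact_mod_cast hcard1
  have h2 : (KF.card : ℝ) ≤ (K.card : ℝ) * F.card := by exact_mod_cast hKFcard
  have hBadnn : (0:ℝ) ≤ (Bad.card : ℝ) := Nat.cast_nonneg _
  have hKnn : (0:ℝ) ≤ (K.card : ℝ) := Nat.cast_nonneg _
  have hcast : ((K.card^2 : ℕ) : ℝ) = (K.card : ℝ)^2 := by push_cast; ring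
  rw [hcast]
  nlinarith [mul_le_mul_of_nonneg_right h1 (le_of_lt hKFpos),
    mul_le_mul_of_nonneg_left h2 (mul_nonneg hBadnn hKnn)]

end SlowEntropyHelpers2
section SlowEntropyHelpers3

variable {G X Y : Type*} [Group G] [MeasurableSpace X] [MeasurableSpace Y]

lemma measurableSet_ne_fin {rP rQ : ℕ} {P : X → Fin rP} {Q : X → Fin rQ}
    (hP : Measurable P) (hQ : Measurable Q) :
    MeasurableSet {z | (P z : ℕ) ≠ (Q z : ℕ)} := by
  have : {z | (P z : ℕ) ≠ (Q z : ℕ)} = ⋃ i : Fin rP, (P ⁻¹' {i}) ∩ ((fun z => (Q z : ℕ)) ⁻¹' {(i : ℕ)})ᶜ := by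
    ext z
    simp only [mem_setOf_eq, mem_iUnion, mem_inter_iff, mem_preimage, mem_singleton_iff,
      mem_compl_iff]
    constructor
    · intro h; exact ⟨P z, rfl, fun hc => h hc.symm⟩
    · rintro ⟨i, rfl, h⟩; exact fun hc => h hc.symm
  rw [this]
  exact MeasurableSet.iUnion fun i => (hP (measurableSet_singleton i)).inter
    ((measurable_from_top.comp hQ (measurableSet_singleton ((i : ℕ)))).compl)

/-- Chebyshev–Markov for the averaged name-difference function. -/
lemma markov_hamdiff (T : G → X → X) (lam : Measure X) {rP rQ : ℕ} {P : X → Fin rP}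
    {Q : X → Fin rQ} (hP : Measurable P) (hQ : Measurable Q) (hT : ∀ g, Measurable (T g))
    (F : Finset G) {a : ℝ} (ha : 0 < a) :
    ENNReal.ofReal a *
      lam {x | a ≤ ((F.filter fun f => (P (T f x) : ℕ) ≠ (Q (T f x) : ℕ)).card : ℝ) / F.card}
      ≤ (F.card : ℝ≥0∞)⁻¹ * ∑ f ∈ F, lam {x | (P (T f x) : ℕ) ≠ (Q (T f x) : ℕ)} := by
  classical
  rcases Nat.eq_zero_or_pos F.card with h0 | h0
  · have hFe : F = ∅ := Finset.card_eq_zero.mp h0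
    subst hFe
    have : {x : X | a ≤ ((Finset.filter (fun f => (P (T f x) : ℕ) ≠ (Q (T f x) : ℕ)) ∅).card : ℝ) / (∅ : Finset G).card} = ∅ := by
      ext x; simp; linarith
    rw [this]
    simp
  have hFpos : (0:ℝ) < F.card := by exact_mod_cast h0
  set W : G → Set X := fun f => {x | (P (T f x) : ℕ) ≠ (Q (T f x) : ℕ)} with hW
  have hWmeas : ∀ f, MeasurableSet (W f) := by
    intro f
    have : W f = (T f) ⁻¹' {z | (P z : ℕ) ≠ (Q z : ℕ)} := rfl
    rw [this]
    exact (hT f) (measurableSet_ne_fin hP hQ)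
  set h : X → ℝ≥0∞ := fun x => (F.card : ℝ≥0∞)⁻¹ * ∑ f ∈ F, (W f).indicator (fun _ => 1) x
    with hh
  have hhmeas : Measurable h := by
    apply Measurable.const_mul
    exact Finset.measurable_sum _ fun f _ =>
      (measurable_const.indicator (hWmeas f))
  have hsum : ∀ x, (∑ f ∈ F, (W f).indicator (fun _ => (1:ℝ≥0∞)) x)
      = ((F.filter fun f => (P (T f x) : ℕ) ≠ (Q (T f x) : ℕ)).card : ℝ≥0∞) := by
    intro x
    rw [Finset.card_filter]
    push_cast
    apply Finset.sum_congr rfl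
    intro f _
    by_cases hx : x ∈ W f
    · rw [indicator_of_mem hx]
      simp [hW] at hx
      simp [hx]
    · rw [indicator_of_notMem hx]
      simp [hW] at hx
      simp [hx]
  have hofReal : ∀ x, h x = ENNReal.ofReal
      (((F.filter fun f => (P (T f x) : ℕ) ≠ (Q (T f x) : ℕ)).card : ℝ) / F.card) := by
    intro x
    rw [hh]
    simp only []
    rw [hsum x, ENNReal.ofReal_div_of_pos hFpos]
    rw [ENNReal.ofReal_natCast, ENNReal.ofReal_natCast, ENNReal.div_eq_inv_mul]
  have hint : ∫⁻ x, h x ∂lam = (F.card : ℝ≥0∞)⁻¹ * ∑ f ∈ F, lam (W f) := by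
    rw [hh]
    simp only []
    rw [lintegral_const_mul _ (Finset.measurable_sum _ fun f _ =>
      (measurable_const.indicator (hWmeas f)))]
    congr 1
    rw [lintegral_finset_sum _ fun f _ => (measurable_const.indicator (hWmeas f))]
    apply Finset.sum_congr rfl
    intro f _
    rw [lintegral_indicator (hWmeas f)]
    simp
  have hmark := mul_meas_ge_le_lintegral₀ (μ := lam) hhmeas.aemeasurable (ENNReal.ofReal a)
  rw [hint] at hmark
  refine le_trans ?_ hmark
  apply mul_le_mul_right
  apply measure_mono
  intro x hx
  rw [mem_setOf_eq, hofReal x]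
  exact ENNReal.ofReal_le_ofReal hx

end SlowEntropyHelpers3
/-- Theorem `GeneratingPartitionsDominate`.
If `(P_m)` is a refining sequence of finite measurable partitions that is generating for `X`
relative to `π`, then `h_slow^{U,(F_n)}(X | π) = lim_m h_slow^{U,(F_n)}(X, P_m | π)
= sup_m h_slow^{U,(F_n)}(X, P_m | π)` for every rate function `U` and Følner sequence. -/
theorem relative_slow_entropy_generating_partitions
    {G X Y : Type*} [Group G] [Countable G]
    [MeasurableSpace X] [MeasurableSpace Y] [StandardBorelSpace X] [StandardBorelSpace Y]
    (T : G → X → X) (μ : Measure X) (S : G → Y → Y) (ν : Measure Y)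
    (hX : IsMPSystem T μ) (hY : IsMPSystem S ν)
    (π : X → Y) (hπ : IsFactorMap T μ S ν π)
    (μy : Y → Measure X) (hdis : IsDisintegration μ ν π μy)
    (r : ℕ → ℕ) (Pm : ∀ m, X → Fin (r m)) (hmeas : ∀ m, Measurable (Pm m))
    (hrefine : ∀ m, ∃ c : Fin (r (m + 1)) → Fin (r m), Pm m = c ∘ Pm (m + 1))
    (hgen : ∀ s : Set X, MeasurableSet s → ∃ t : Set X,
      MeasurableSet[MeasurableSpace.generateFrom
        ({A : Set X | ∃ (m : ℕ) (g : G) (i : Fin (r m)), A = T g ⁻¹' (Pm m ⁻¹' {i})} ∪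
         {A : Set X | ∃ B : Set Y, MeasurableSet B ∧ A = π ⁻¹' B})] t ∧
      μ (s ∆ t) = 0)
    (U : ℕ → ℝ) (hU : IsRateFunction U) (F : ℕ → Finset G) (hF : IsFolner F) :
    (slowEntropyRel T μy ν U F = ⨆ m, slowEntropyPartRel T μy ν (Pm m) U F) ∧
    Tendsto (fun m => slowEntropyPartRel T μy ν (Pm m) U F) atTop
      (nhds (slowEntropyRel T μy ν U F)) := by
  classical
  haveI := hX.prob
  haveI := hY.prob
  have hprob := hdis.prob
  have hcomp : ∀ m m', m ≤ m' → ∃ c : Fin (r m') → Fin (r m), Pm m = c ∘ Pm m' := by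
    intro m m' h
    induction m', h using Nat.le_induction with
    | base => exact ⟨id, rfl⟩
    | succ m' hle ih =>
      obtain ⟨c₁, hc₁⟩ := ih
      obtain ⟨c₂, hc₂⟩ := hrefine m'
      exact ⟨c₁ ∘ c₂, by rw [hc₁, hc₂]; rfl⟩
  have hmono : Monotone fun m => slowEntropyPartRel T μy ν (Pm m) U F := by
    intro m m' h
    obtain ⟨c, hc⟩ := hcomp m m' h
    exact slowEntropyPartRel_le_comp T μy ν hprob hc U hU.1 F
  have hard : ∀ (rP : ℕ) (P : X → Fin rP), Measurable P →
      slowEntropyPartRel T μy ν P U F ≤ ⨆ m, slowEntropyPartRel T μy ν (Pm m) U F := by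
    have hXne : Nonempty X := by
      by_contra hempty
      haveI := not_nonempty_iff.mp hempty
      have h1 : μ univ = 1 := measure_univ
      rw [Set.eq_empty_of_isEmpty (univ : Set X), measure_empty] at h1
      exact zero_ne_one h1
    set 𝒢 : Set (Set X) :=
      ({A : Set X | ∃ (m : ℕ) (g : G) (i : Fin (r m)), A = T g ⁻¹' (Pm m ⁻¹' {i})} ∪
       {A : Set X | ∃ B : Set Y, MeasurableSet B ∧ A = π ⁻¹' B}) with h𝒢
    have hlift : ∀ (m₁ m₂ : ℕ) (K₁ K₂ : Finset G), m₁ ≤ m₂ → K₁ ⊆ K₂ →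
        ∀ C₁ : Set ((K₁ → Fin (r m₁)) × Y), MeasurableSet C₁ →
        ∃ C₂ : Set ((K₂ → Fin (r m₂)) × Y), MeasurableSet C₂ ∧
          (fun x => (fun g : K₁ => Pm m₁ (T (g : G) x), π x)) ⁻¹' C₁ =
          (fun x => (fun g : K₂ => Pm m₂ (T (g : G) x), π x)) ⁻¹' C₂ := by
      intro m₁ m₂ K₁ K₂ hm hK C₁ hC₁
      obtain ⟨c, hc⟩ := hcomp m₁ m₂ hm
      have hψmeas : Measurable (fun p : ((K₂ → Fin (r m₂)) × Y) =>
          ((fun g : K₁ => c (p.1 ⟨(g : G), hK g.2⟩), p.2) : (K₁ → Fin (r m₁)) × Y)) := by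
        apply Measurable.prod
        · apply measurable_pi_lambda
          intro g
          exact measurable_from_top.comp ((measurable_pi_apply _).comp measurable_fst)
        · exact measurable_snd
      refine ⟨(fun p : ((K₂ → Fin (r m₂)) × Y) =>
          ((fun g : K₁ => c (p.1 ⟨(g : G), hK g.2⟩), p.2) : (K₁ → Fin (r m₁)) × Y)) ⁻¹' C₁,
        hψmeas hC₁, ?_⟩
      rw [Set.preimage_preimage]
      refine congrArg (fun φ => φ ⁻¹' C₁) ?_
      funext x
      show ((fun g : K₁ => Pm m₁ (T (g : G) x), π x) : (K₁ → Fin (r m₁)) × Y) =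
        ((fun g : K₁ => c (Pm m₂ (T (g : G) x)), π x) : (K₁ → Fin (r m₁)) × Y)
      congr 1
      funext g
      rw [hc]
      rfl
    have hle : MeasurableSpace.generateFrom 𝒢 ≤ (inferInstance : MeasurableSpace X) := by
      apply MeasurableSpace.generateFrom_le
      rintro A (⟨m, g, i, rfl⟩ | ⟨B, hB, rfl⟩)
      · exact hX.meas g (hmeas m (measurableSet_singleton i))
      · exact hπ.meas hB
    have hform : ∀ A ∈ MeasureTheory.generateSetAlgebra 𝒢,
        ∃ (m : ℕ) (K : Finset G) (C : Set ((K → Fin (r m)) × Y)), MeasurableSet C ∧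
          A = (fun x => (fun g : K => Pm m (T (g : G) x), π x)) ⁻¹' C := by
      intro A hA
      induction hA with
      | base s hs =>
        rcases hs with ⟨m, g, i, rfl⟩ | ⟨B, hB, rfl⟩
        · refine ⟨m, {g}, (fun p : (({g} : Finset G) → Fin (r m)) × Y =>
            p.1 ⟨g, Finset.mem_singleton_self g⟩) ⁻¹' {i},
            ((measurable_pi_apply _).comp measurable_fst) (measurableSet_singleton i), ?_⟩
          ext x
          simp [Set.mem_preimage]
        · exact ⟨0, ∅, Prod.snd ⁻¹' B, measurable_snd hB, by ext x; simp⟩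
      | empty => exact ⟨0, ∅, ∅, MeasurableSet.empty, by simp⟩
      | compl s hs ih =>
        obtain ⟨m, K, C, hC, rfl⟩ := ih
        exact ⟨m, K, Cᶜ, hC.compl, by rw [Set.preimage_compl]⟩
      | union s t hs ht ihs iht =>
        obtain ⟨m₁, K₁, C₁, h1, rfl⟩ := ihs
        obtain ⟨m₂, K₂, C₂, h2, rfl⟩ := iht
        obtain ⟨C₁', h1', e1⟩ := hlift m₁ (max m₁ m₂) K₁ (K₁ ∪ K₂) (le_max_left _ _)
          Finset.subset_union_left C₁ h1
        obtain ⟨C₂', h2', e2⟩ := hlift m₂ (max m₁ m₂) K₂ (K₁ ∪ K₂) (le_max_right _ _)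
          Finset.subset_union_right C₂ h2
        exact ⟨max m₁ m₂, K₁ ∪ K₂, C₁' ∪ C₂', h1'.union h2',
          by rw [Set.preimage_union, ← e1, ← e2]⟩
    have hfinm : IsFiniteMeasure (μ.trim hle) := isFiniteMeasure_trim hle
    have hdense := @MeasureTheory.Measure.MeasureDense.of_generateFrom_isSetAlgebra_finite X
      (MeasurableSpace.generateFrom 𝒢) (μ.trim hle) (MeasureTheory.generateSetAlgebra 𝒢) hfinm
      MeasureTheory.isSetAlgebra_generateSetAlgebra
      MeasureTheory.generateFrom_generateSetAlgebra_eq.symm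
    have happrox : ∀ s : Set X, MeasurableSet s → ∀ δ : ℝ, 0 < δ →
        ∃ (m : ℕ) (K : Finset G) (C : Set ((K → Fin (r m)) × Y)), MeasurableSet C ∧
          μ (s ∆ ((fun x => (fun g : K => Pm m (T (g : G) x), π x)) ⁻¹' C)) <
            ENNReal.ofReal δ := by
      intro s hs δ hδ
      obtain ⟨t, ht, hst⟩ := hgen s hs
      have hfin : μ.trim hle t ≠ ⊤ :=
        @measure_ne_top X (MeasurableSpace.generateFrom 𝒢) (μ.trim hle) hfinm t
      obtain ⟨A, hA, hAt⟩ := @MeasureTheory.Measure.MeasureDense.approx X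
        (MeasurableSpace.generateFrom 𝒢) (μ.trim hle) (MeasureTheory.generateSetAlgebra 𝒢)
        hdense t ht hfin δ hδ
      have hAmeas : MeasurableSet[MeasurableSpace.generateFrom 𝒢] A := by
        rw [← MeasureTheory.generateFrom_generateSetAlgebra_eq]
        exact MeasurableSpace.measurableSet_generateFrom hA
      have htA : μ (t ∆ A) < ENNReal.ofReal δ := by
        rwa [trim_measurableSet_eq hle (ht.symmDiff hAmeas)] at hAt
      have hsA : μ (s ∆ A) < ENNReal.ofReal δ := by
        calc μ (s ∆ A) ≤ μ (s ∆ t) + μ (t ∆ A) := measure_symmDiff_le s t A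
          _ = μ (t ∆ A) := by rw [hst, zero_add]
          _ < _ := htA
      obtain ⟨m, K, C, hC, rfl⟩ := hform A hA
      exact ⟨m, K, C, hC, hsA⟩
    have hQex : ∀ (rP : ℕ) (P : X → Fin rP), Measurable P → 0 < rP → ∀ δ : ℝ, 0 < δ →
        ∃ (M : ℕ) (K : Finset G) (Q : X → Fin rP), (1:G) ∈ K ∧ Measurable Q ∧
          (∀ z z', π z = π z' → (∀ g ∈ K, Pm M (T g z) = Pm M (T g z')) → Q z = Q z') ∧
          μ {x | P x ≠ Q x} < ENNReal.ofReal δ := by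
      intro rP P hP hrP δ hδ
      have hδ' : 0 < δ / (rP + 1) := by positivity
      choose mi Ki Ci hCmeas hclose using fun i : Fin rP =>
        happrox (P ⁻¹' {i}) (hP (measurableSet_singleton i)) (δ / (rP+1)) hδ'
      set M := Finset.univ.sup mi with hM
      set K : Finset G := (Finset.univ.biUnion Ki) ∪ {1} with hKdef
      have hK1 : (1:G) ∈ K := Finset.mem_union_right _ (Finset.mem_singleton_self 1)
      have hsubK : ∀ i, Ki i ⊆ K := fun i g hg =>
        Finset.mem_union_left _ (Finset.mem_biUnion.mpr ⟨i, Finset.mem_univ i, hg⟩)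
      have hmi : ∀ i, mi i ≤ M := fun i => Finset.le_sup (Finset.mem_univ i)
      choose C' hC'meas hEq using fun i : Fin rP =>
        hlift (mi i) M (Ki i) K (hmi i) (hsubK i) (Ci i) (hCmeas i)
      have hφmeas : Measurable (fun x => ((fun g : K => Pm M (T (g : G) x), π x) :
          (K → Fin (r M)) × Y)) := by
        apply Measurable.prod
        · exact measurable_pi_lambda _ fun g => (hmeas M).comp (hX.meas _)
        · exact hπ.meas
      set last : Fin rP := ⟨rP - 1, by omega⟩ with hlast
      have hlastle : ∀ i : Fin rP, i ≤ last := fun i => by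
        have := i.isLt
        simp only [hlast, Fin.le_def]
        omega
      have hfilt : ∀ z : (K → Fin (r M)) × Y,
          (Finset.univ.filter fun i : Fin rP => z ∈ C' i ∨ i = last).Nonempty :=
        fun z => ⟨last, Finset.mem_filter.mpr ⟨Finset.mem_univ _, Or.inr rfl⟩⟩
      set q : ((K → Fin (r M)) × Y) → Fin rP := fun z =>
        (Finset.univ.filter fun i : Fin rP => z ∈ C' i ∨ i = last).min' (hfilt z) with hq
      have hqiff : ∀ (z : (K → Fin (r M)) × Y) (i : Fin rP),
          q z = i ↔ ((z ∈ C' i ∨ i = last) ∧ ∀ j, j < i → z ∉ C' j) := by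
        intro z i
        constructor
        · rintro rfl
          have hmem := Finset.min'_mem _ (hfilt z)
          refine ⟨(Finset.mem_filter.mp hmem).2, fun j hj hzj => ?_⟩
          have hle' : q z ≤ j := Finset.min'_le _ j
            (Finset.mem_filter.mpr ⟨Finset.mem_univ _, Or.inl hzj⟩)
          exact absurd (lt_of_le_of_lt hle' hj) (lt_irrefl _)
        · rintro ⟨hi, hlt⟩
          refine le_antisymm (Finset.min'_le _ i
            (Finset.mem_filter.mpr ⟨Finset.mem_univ _, hi⟩)) (Finset.le_min' _ _ _ ?_)
          intro j hj
          rcases Finset.mem_filter.mp hj with ⟨-, hj'⟩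
          by_contra hji
          push_neg at hji
          rcases hj' with hzj | rfl
          · exact absurd hzj (hlt j hji)
          · exact absurd (lt_of_lt_of_le hji (hlastle i)) (lt_irrefl _)
      have hqmeas : Measurable q := by
        apply measurable_to_countable'
        intro i
        have hset : q ⁻¹' {i} = ((C' i ∪ (if i = last then univ else ∅)) ∩
            ⋂ (j : Fin rP), ⋂ (_ : j < i), (C' j)ᶜ) := by
          ext z
          simp only [mem_preimage, mem_singleton_iff, mem_inter_iff, mem_union, mem_iInter,
            mem_compl_iff, hqiff]
          constructor
          · rintro ⟨hi, hlt⟩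
            refine ⟨?_, fun j hj => hlt j hj⟩
            rcases hi with h | h
            · exact Or.inl h
            · right; rw [if_pos h]; exact mem_univ z
          · rintro ⟨hi, hlt⟩
            refine ⟨?_, fun j hj => hlt j hj⟩
            rcases hi with h | h
            · exact Or.inl h
            · by_cases he : i = last
              · exact Or.inr he
              · rw [if_neg he] at h; exact absurd h (notMem_empty z)
        rw [hset]
        refine MeasurableSet.inter ?_ (MeasurableSet.iInter fun j => MeasurableSet.iInter
          fun _ => (hC'meas j).compl)
        refine (hC'meas i).union ?_
        by_cases he : i = last
        · rw [if_pos he]; exact MeasurableSet.univ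
        · rw [if_neg he]; exact MeasurableSet.empty
      refine ⟨M, K, fun x => q ((fun g : K => Pm M (T (g : G) x), π x)), hK1,
        hqmeas.comp hφmeas, ?_, ?_⟩
      · intro z z' hπz hag
        have harg : ((fun g : K => Pm M (T (g : G) z), π z) : (K → Fin (r M)) × Y) =
            ((fun g : K => Pm M (T (g : G) z'), π z') : (K → Fin (r M)) × Y) := by
          refine Prod.ext ?_ hπz
          exact funext fun g => hag (g : G) g.2
        show q ((fun g : K => Pm M (T (g : G) z), π z)) =
          q ((fun g : K => Pm M (T (g : G) z'), π z'))
        rw [harg]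
      · have hclose2 : {x | P x ≠ q ((fun g : K => Pm M (T (g : G) x), π x))} ⊆
            ⋃ i : Fin rP, ((P ⁻¹' {i}) ∆
              ((fun x => ((fun g : K => Pm M (T (g : G) x), π x) :
                (K → Fin (r M)) × Y)) ⁻¹' (C' i))) := by
          intro x hx
          by_contra hcon
          simp only [mem_iUnion, not_exists] at hcon
          apply hx
          have hiff : ∀ i : Fin rP, P x = i ↔
              ((fun g : K => Pm M (T (g : G) x), π x) : (K → Fin (r M)) × Y) ∈ C' i := by
            intro i
            have h2 := hcon i
            rw [Set.mem_symmDiff] at h2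
            push_neg at h2
            exact ⟨fun h => h2.1 h, fun h => h2.2 h⟩
          show P x = q _
          symm
          rw [hqiff]
          constructor
          · exact Or.inl ((hiff (P x)).mp rfl)
          · intro j hj hzj
            have : P x = j := (hiff j).mpr hzj
            rw [this] at hj
            exact lt_irrefl _ hj
        have hterm : ∀ i : Fin rP, μ ((P ⁻¹' {i}) ∆
            ((fun x => ((fun g : K => Pm M (T (g : G) x), π x) :
              (K → Fin (r M)) × Y)) ⁻¹' (C' i))) < ENNReal.ofReal (δ/(rP+1)) := by
          intro i
          have h3 := hclose i
          rwa [hEq i] at h3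
        calc μ {x | P x ≠ q ((fun g : K => Pm M (T (g : G) x), π x))}
            ≤ ∑ i : Fin rP, μ ((P ⁻¹' {i}) ∆
              ((fun x => ((fun g : K => Pm M (T (g : G) x), π x) :
                (K → Fin (r M)) × Y)) ⁻¹' (C' i))) :=
              le_trans (measure_mono hclose2) (measure_iUnion_fintype_le μ _)
          _ ≤ ∑ _i : Fin rP, ENNReal.ofReal (δ/(rP+1)) :=
              Finset.sum_le_sum fun i _ => (hterm i).le
          _ = (rP : ℝ≥0∞) * ENNReal.ofReal (δ/(rP+1)) := by
              rw [Finset.sum_const, Finset.card_univ, Fintype.card_fin, nsmul_eq_mul]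
          _ = ENNReal.ofReal (rP * (δ/(rP+1))) := by
              rw [← ENNReal.ofReal_natCast rP, ← ENNReal.ofReal_mul (Nat.cast_nonneg rP)]
          _ < ENNReal.ofReal δ := by
              rw [ENNReal.ofReal_lt_ofReal_iff hδ]
              have h1 : (0:ℝ) < (rP:ℝ) + 1 := by positivity
              calc (rP:ℝ) * (δ/(rP+1)) < ((rP:ℝ)+1) * (δ/(rP+1)) :=
                    mul_lt_mul_of_pos_right (by linarith) hδ'
                _ = δ := by field_simp
    intro rP P hP
    have hgoal : ∀ ε : ℝ, 0 < ε →
        Filter.limsup (fun n => ENNReal.ofReal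
          ((hamCovRel T μy ν P (F n) ε : ℝ) / U (F n).card)) atTop
        ≤ ⨆ m, slowEntropyPartRel T μy ν (Pm m) U F := by
      intro ε hε
      rcases le_or_gt 1 ε with h1 | h1
      · have hzero : ∀ n, hamCovRel T μy ν P (F n) ε = 0 := by
          intro n
          refine Nat.le_zero.mp (hamCovRel_le T μy ν P (F n) ε
            ⟨∅, MeasurableSet.empty, ?_, fun y hy => absurd hy (notMem_empty y)⟩)
          rw [measure_empty, ENNReal.ofReal_eq_zero.mpr (by linarith : 1 - ε ≤ 0)]
        have hzfun : (fun n => ENNReal.ofReal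
            ((hamCovRel T μy ν P (F n) ε : ℝ) / U (F n).card)) = fun _ => 0 := by
          funext n; rw [hzero n]; simp
        rw [hzfun, limsup_const]
        exact zero_le
      have hrP : 0 < rP := (P hXne.some).pos
      obtain ⟨mQ, K, Q, hK1, hQmeas, hdet, hPQ⟩ :=
        hQex rP P hP hrP (ε^3/32) (by positivity)
      set c : ℕ := K.card ^ 2 with hc
      have hKne : K.Nonempty := ⟨1, hK1⟩
      have hcpos : 0 < c := pow_pos (Finset.card_pos.mpr hKne) 2
      have hcR : (1:ℝ) ≤ (c:ℝ) := by exact_mod_cast hcpos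
      set ε₃ : ℝ := ε / (8 * c) with hε₃def
      have hε₃pos : 0 < ε₃ := div_pos hε (by linarith)
      have hε₃le : ε₃ ≤ ε/8 := by
        rw [hε₃def, div_le_div_iff₀ (by linarith) (by norm_num)]
        nlinarith [hε.le]
      -- Følner control
      have hFcard : ∀ n, (0:ℝ) < ((F n).card : ℝ) := fun n => by
        exact_mod_cast Finset.card_pos.mpr (hF.1 n)
      set ρ : G → ℕ → ℝ := fun g n =>
        ((((F n).image fun h => g * h) \ F n).card : ℝ) / ((F n).card : ℝ) with hρ
      have hρtend : ∀ g : G, Tendsto (ρ g) atTop (nhds 0) := by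
        intro g
        have hna : ∀ n, ρ g n =
            1 - ((((F n).image fun h => g * h) ∩ F n).card : ℝ) / ((F n).card : ℝ) := by
          intro n
          have hinj : ((F n).image fun h => g * h).card = (F n).card :=
            Finset.card_image_of_injective _ (mul_right_injective g)
          have hsplit : ((((F n).image fun h => g * h) ∩ F n).card : ℝ) +
              ((((F n).image fun h => g * h) \ F n).card : ℝ) = ((F n).card : ℝ) := by
            rw [← hinj]
            exact_mod_cast Finset.card_inter_add_card_sdiff _ _
          have hne := (hFcard n).ne'
          have hsum2 : ((((F n).image fun h => g * h) \ F n).card : ℝ)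
              = ((F n).card : ℝ) - ((((F n).image fun h => g * h) ∩ F n).card : ℝ) := by
            linarith
          simp only [hρ]
          rw [hsum2, sub_div, div_self hne]
        have h2 := (tendsto_const_nhds (x := (1:ℝ)) (f := atTop)).sub (hF.2 g)
        rw [sub_self] at h2
        have h3 : ρ g = fun n =>
            1 - ((((F n).image fun h => g * h) ∩ F n).card : ℝ) / ((F n).card : ℝ) :=
          funext hna
        rw [h3]
        exact h2
      have hKsum : Tendsto (fun n => ∑ g ∈ K, ρ g n) atTop (nhds 0) := by
        have h4 := tendsto_finset_sum K (fun (g : G) (_ : g ∈ K) => hρtend g)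
        simpa using h4
      obtain ⟨N, hN⟩ : ∃ N, ∀ n ≥ N, ∑ g ∈ K, ρ g n < ε₃ :=
        eventually_atTop.mp (hKsum.eventually_lt_const hε₃pos)
      -- the key per-n comparison
      have key : ∀ n, N ≤ n →
          hamCovRel T μy ν P (F n) ε ≤ hamCovRel T μy ν (Pm mQ) (F n) ε₃ := by
        intro n hn
        set Fn := F n with hFn
        set KF : Finset G := (K ×ˢ Fn).image (fun p : G × G => p.1 * p.2) with hKF
        have hFsub : Fn ⊆ KF := fun f hf =>
          Finset.mem_image.mpr ⟨(1, f), Finset.mem_product.mpr ⟨hK1, hf⟩, by group⟩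
        have hKFcard : ((KF \ Fn).card : ℝ) ≤ ε₃ * Fn.card := by
          have hsub : KF \ Fn ⊆ K.biUnion fun g => ((Fn.image fun h => g * h) \ Fn) := by
            intro h hh
            rcases Finset.mem_sdiff.mp hh with ⟨hhKF, hhF⟩
            rcases Finset.mem_image.mp hhKF with ⟨p, hp, rfl⟩
            rcases Finset.mem_product.mp hp with ⟨hp1, hp2⟩
            exact Finset.mem_biUnion.mpr ⟨p.1, hp1,
              Finset.mem_sdiff.mpr ⟨Finset.mem_image.mpr ⟨p.2, hp2, rfl⟩, hhF⟩⟩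
          have h5 : ((KF \ Fn).card : ℝ) ≤
              ∑ g ∈ K, (((Fn.image fun h => g * h) \ Fn).card : ℝ) := by
            exact_mod_cast (Finset.card_le_card hsub).trans Finset.card_biUnion_le
          have h6 : ∑ g ∈ K, (((Fn.image fun h => g * h) \ Fn).card : ℝ)
              = (∑ g ∈ K, ρ g n) * (Fn.card : ℝ) := by
            rw [Finset.sum_mul]
            refine Finset.sum_congr rfl fun g _ => ?_
            simp only [hρ, hFn]
            exact (div_mul_cancel₀ _ (hFcard n).ne').symm
          refine h5.trans ?_
          rw [h6]
          exact mul_le_mul_of_nonneg_right (hN n hn).le (Nat.cast_nonneg _)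
        obtain ⟨S', hS'm, hS'ν, hS'cov⟩ := hamCovRel_mem T μy ν hprob (Pm mQ) Fn hε₃pos
        set W : G → Set X := fun f => {x | (P (T f x) : ℕ) ≠ (Q (T f x) : ℕ)} with hW
        have hWmeas : ∀ f, MeasurableSet (W f) := fun f =>
          (hX.meas f) (measurableSet_ne_fin hP hQmeas)
        have hWμ : ∀ f, μ (W f) = μ {z | (P z : ℕ) ≠ (Q z : ℕ)} := fun f =>
          (hX.mp f).measure_preimage (measurableSet_ne_fin hP hQmeas).nullMeasurableSet
        set b : Y → ℝ≥0∞ := fun y => (Fn.card : ℝ≥0∞)⁻¹ * ∑ f ∈ Fn, μy y (W f) with hb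
        have hbmeas : Measurable b :=
          (Finset.measurable_sum _ fun f _ => hdis.meas _ (hWmeas f)).const_mul _
        have hbint : ∫⁻ y, b y ∂ν = (Fn.card : ℝ≥0∞)⁻¹ * ∑ f ∈ Fn, μ (W f) := by
          rw [hb]
          rw [lintegral_const_mul _ (Finset.measurable_sum _ fun f _ => hdis.meas _ (hWmeas f))]
          congr 1
          rw [lintegral_finset_sum _ fun f _ => hdis.meas _ (hWmeas f)]
          exact Finset.sum_congr rfl fun f _ => (hdis.eq _ (hWmeas f)).symm
        have hPQ' : μ {z | (P z : ℕ) ≠ (Q z : ℕ)} < ENNReal.ofReal (ε^3/32) := by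
          have h7 : {z | (P z : ℕ) ≠ (Q z : ℕ)} = {z | P z ≠ Q z} := by
            ext z; simp [Fin.ext_iff]
          rw [h7]; exact hPQ
        have hFne : (Fn.card : ℝ≥0∞) ≠ 0 := by
          simp only [ne_eq, Nat.cast_eq_zero, Finset.card_eq_zero]
          exact (hF.1 n).ne_empty
        have hbint2 : ∫⁻ y, b y ∂ν ≤ ENNReal.ofReal (ε^3/32) := by
          rw [hbint]
          calc (Fn.card : ℝ≥0∞)⁻¹ * ∑ f ∈ Fn, μ (W f)
              = (Fn.card : ℝ≥0∞)⁻¹ * ((Fn.card : ℝ≥0∞) *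
                μ {z | (P z : ℕ) ≠ (Q z : ℕ)}) := by
                congr 1
                rw [Finset.sum_congr rfl fun f _ => hWμ f, Finset.sum_const, nsmul_eq_mul]
            _ = μ {z | (P z : ℕ) ≠ (Q z : ℕ)} := by
                rw [← mul_assoc, ENNReal.inv_mul_cancel hFne (ENNReal.natCast_ne_top _), one_mul]
            _ ≤ _ := hPQ'.le
        set δ₁ : ℝ := ε^2/8 with hδ₁
        have hδ₁pos : 0 < δ₁ := by positivity
        set GoodY : Set Y := {y | b y ≤ ENNReal.ofReal δ₁} with hGoodY
        have hGoodYmeas : MeasurableSet GoodY := hbmeas measurableSet_Iic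
        have hGoodYc : ν GoodYᶜ ≤ ENNReal.ofReal (ε/4) := by
          have hmark := mul_meas_ge_le_lintegral₀ (μ := ν) hbmeas.aemeasurable
            (ENNReal.ofReal δ₁)
          have hsub2 : GoodYᶜ ⊆ {y | ENNReal.ofReal δ₁ ≤ b y} := by
            intro y hy
            have hy' : ¬ b y ≤ ENNReal.ofReal δ₁ := hy
            exact (not_le.mp hy').le
          have h8 : ENNReal.ofReal δ₁ * ν GoodYᶜ ≤ ENNReal.ofReal (ε^3/32) :=
            le_trans (mul_le_mul_right (measure_mono hsub2) _) (le_trans hmark hbint2)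
          have h9 : ν GoodYᶜ ≤ ENNReal.ofReal (ε^3/32) / ENNReal.ofReal δ₁ := by
            rw [ENNReal.le_div_iff_mul_le
              (Or.inl (ENNReal.ofReal_pos.mpr hδ₁pos).ne')
              (Or.inl ENNReal.ofReal_ne_top)]
            rw [mul_comm]; exact h8
          refine h9.trans ?_
          rw [← ENNReal.ofReal_div_of_pos hδ₁pos]
          apply ENNReal.ofReal_le_ofReal
          have h10 : (ε^3/32) / δ₁ = ε/4 := by
            rw [hδ₁]; field_simp; ring
          rw [h10]
        obtain ⟨Nbad, hNsub, hNm, hNnull⟩ :=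
          exists_measurable_superset_of_null (ae_iff.mp hdis.supp)
        set Sy : Set Y := S' ∩ GoodY ∩ Nbadᶜ with hSy
        have hSymeas : MeasurableSet Sy := (hS'm.inter hGoodYmeas).inter hNm.compl
        have hSyν : ENNReal.ofReal (1 - ε) ≤ ν Sy := by
          have hS'c : ν S'ᶜ ≤ ENNReal.ofReal ε₃ := by
            rw [measure_compl hS'm (measure_ne_top _ _), measure_univ]
            calc 1 - ν S' ≤ 1 - ENNReal.ofReal (1 - ε₃) := tsub_le_tsub le_rfl hS'ν
              _ = ENNReal.ofReal ε₃ := by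
                  rw [← ENNReal.ofReal_one, ← ENNReal.ofReal_sub _ (by linarith)]
                  norm_num
          have hSyc : Syᶜ ⊆ (S'ᶜ ∪ GoodYᶜ) ∪ Nbad := by
            intro y hy
            by_cases hy1 : y ∈ S'
            · by_cases hy2 : y ∈ GoodY
              · right
                by_contra hy3
                exact hy ⟨⟨hy1, hy2⟩, hy3⟩
              · left; right; exact hy2
            · left; left; exact hy1
          have h11 : ν Syᶜ ≤ ENNReal.ofReal ε₃ + ENNReal.ofReal (ε/4) := by
            calc ν Syᶜ ≤ ν ((S'ᶜ ∪ GoodYᶜ) ∪ Nbad) := measure_mono hSyc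
              _ ≤ ν (S'ᶜ ∪ GoodYᶜ) + ν Nbad := measure_union_le _ _
              _ = ν (S'ᶜ ∪ GoodYᶜ) := by rw [hNnull, add_zero]
              _ ≤ ν S'ᶜ + ν GoodYᶜ := measure_union_le _ _
              _ ≤ _ := add_le_add hS'c hGoodYc
          have hcompl := measure_add_measure_compl (μ := ν) hSymeas
          rw [measure_univ] at hcompl
          have h12 : (1:ℝ≥0∞) ≤ ν Sy + (ENNReal.ofReal ε₃ + ENNReal.ofReal (ε/4)) := by
            calc (1:ℝ≥0∞) = ν Sy + ν Syᶜ := hcompl.symm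
              _ ≤ _ := add_le_add_right h11 _
          have h13 : 1 - (ENNReal.ofReal ε₃ + ENNReal.ofReal (ε/4)) ≤ ν Sy :=
            tsub_le_iff_right.mpr h12
          refine le_trans ?_ h13
          rw [← ENNReal.ofReal_add (by positivity) (by positivity), ← ENNReal.ofReal_one,
            ← ENNReal.ofReal_sub _ (by positivity)]
          exact ENNReal.ofReal_le_ofReal (by linarith)
        refine hamCovRel_le T μy ν P Fn ε ⟨Sy, hSymeas, hSyν, fun y hy => ?_⟩
        haveI := hprob y
        have hyS' : y ∈ S' := hy.1.1
        have hyGood : b y ≤ ENNReal.ofReal δ₁ := hy.1.2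
        have hyN : y ∉ Nbad := hy.2
        have hysupp : μy y (π ⁻¹' {y}) = 1 := by
          by_contra hcon
          exact hyN (hNsub hcon)
        have hbadA : μy y {x | ε/4 ≤
            ((Fn.filter fun f => (P (T f x) : ℕ) ≠ (Q (T f x) : ℕ)).card : ℝ) / Fn.card}
            ≤ ENNReal.ofReal (ε/2) := by
          have hmark := markov_hamdiff T (μy y) hP hQmeas hX.meas Fn
            (by positivity : (0:ℝ) < ε/4)
          have h13 : ENNReal.ofReal (ε/4) * μy y {x | ε/4 ≤
              ((Fn.filter fun f => (P (T f x) : ℕ) ≠ (Q (T f x) : ℕ)).card : ℝ) / Fn.card}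
              ≤ ENNReal.ofReal δ₁ := le_trans hmark hyGood
          have h14 : μy y {x | ε/4 ≤
              ((Fn.filter fun f => (P (T f x) : ℕ) ≠ (Q (T f x) : ℕ)).card : ℝ) / Fn.card}
              ≤ ENNReal.ofReal δ₁ / ENNReal.ofReal (ε/4) := by
            rw [ENNReal.le_div_iff_mul_le
              (Or.inl (ENNReal.ofReal_pos.mpr (by positivity : (0:ℝ) < ε/4)).ne')
              (Or.inl ENNReal.ofReal_ne_top)]
            rw [mul_comm]; exact h13
          refine h14.trans ?_
          rw [← ENNReal.ofReal_div_of_pos (by positivity)]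
          apply ENNReal.ofReal_le_ofReal
          have h15 : δ₁ / (ε/4) = ε/2 := by rw [hδ₁]; field_simp; ring
          rw [h15]
        have hA : hamCov T (μy y) P Fn ε ≤ hamCov T (μy y) Q Fn (ε/4) :=
          hamCov_le_of_close T (μy y) P Q Fn hε hbadA
        have hfull : μy y (π ⁻¹' {y})ᶜ = 0 := by
          rw [measure_compl (hπ.meas (measurableSet_singleton y)) (measure_ne_top _ _),
            measure_univ, hysupp, tsub_self]
        have hcount : ∀ x ∈ π ⁻¹' {y}, ∀ x' ∈ π ⁻¹' {y},
            hamDist T Q Fn x x' ≤ (c:ℝ) * hamDist T (Pm mQ) KF x x' := by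
          intro x hx x' hx'
          have hxx : π x = π x' := by
            rw [mem_preimage, mem_singleton_iff] at hx hx'
            rw [hx, hx']
          have h16 := hamDist_det_bound T (fun g g' z => hX.mul g g' z) (Pm mQ) Q π S
            hπ.equiv K Fn (fun z z' hz hzz => hdet z z' hz hzz) x x' hxx
          exact h16
        have hB : hamCov T (μy y) Q Fn (ε/4) ≤ hamCov T (μy y) (Pm mQ) KF (ε/(4*c)) := by
          refine hamCov_le_of_full T (μy y) Q (Pm mQ) Fn KF
            (div_pos hε (by linarith)) ?_ ?_ (π ⁻¹' {y}) hfull hcount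
          · rw [div_le_div_iff₀ (by linarith) (by norm_num)]
            nlinarith [mul_nonneg hε.le (sub_nonneg.mpr hcR)]
          · have hcne : (c:ℝ) ≠ 0 := by
              have := hcpos
              positivity
            have h17 : (c:ℝ) * (ε/(4*c)) = ε/4 := by
              field_simp
            exact le_of_eq h17
        have hC : hamCov T (μy y) (Pm mQ) KF (ε/(4*c)) ≤ hamCov T (μy y) (Pm mQ) Fn ε₃ := by
          refine hamCov_le_of_subset T (μy y) (Pm mQ) Fn KF hFsub hε₃pos hε₃pos.le ?_ hKFcard
          have hcne : (c:ℝ) ≠ 0 := by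
            have := hcpos
            positivity
          have h18 : ε₃ + ε₃ = ε/(4*c) := by
            rw [hε₃def]; field_simp; ring
          exact le_of_eq h18
        exact le_trans hA (le_trans hB (le_trans hC (hS'cov y hyS')))
      -- conclude via limsup
      have hlim : Filter.limsup (fun n => ENNReal.ofReal
          ((hamCovRel T μy ν P (F n) ε : ℝ) / U (F n).card)) atTop
          ≤ Filter.limsup (fun n => ENNReal.ofReal
            ((hamCovRel T μy ν (Pm mQ) (F n) ε₃ : ℝ) / U (F n).card)) atTop := by
        refine Filter.limsup_le_limsup ?_
        refine eventually_atTop.mpr ⟨N, fun n hn => ?_⟩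
        apply ENNReal.ofReal_le_ofReal
        have h0 := (hU.1 (F n).card).le
        gcongr
        exact_mod_cast key n hn
      refine le_trans hlim (le_trans ?_
        (le_iSup (fun m => slowEntropyPartRel T μy ν (Pm m) U F) mQ))
      have hfinal := le_iSup₂ (f := fun (e : ℝ) (_ : e ∈ Ioi (0:ℝ)) =>
        Filter.limsup (fun n => ENNReal.ofReal
          ((hamCovRel T μy ν (Pm mQ) (F n) e : ℝ) / U (F n).card)) atTop)
        ε₃ (Set.mem_Ioi.mpr hε₃pos)
      exact hfinal
    exact iSup₂_le fun ε hε => hgoal ε hε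
  have key : slowEntropyRel T μy ν U F = ⨆ m, slowEntropyPartRel T μy ν (Pm m) U F := by
    apply le_antisymm
    · exact iSup_le fun rP => iSup_le fun P => iSup_le fun hP => hard rP P hP
    · exact iSup_le fun m => le_iSup_of_le (r m) <| le_iSup_of_le (Pm m) <|
        le_iSup_of_le (hmeas m) le_rfl
  exact ⟨key, key ▸ tendsto_atTop_iSup hmono⟩
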